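/- arXiv:1410.4382 — 5 statements merged into one kernel-verified Lean document; each statement's English description precedes it below -/
import Mathlib

section
/- Let (Ω, 𝒢, (𝒢_k), P) be a filtered probability space and Y_1, Y_2, … an adapted real process such that for each k the conditional distribution function F_k of Y_k given 𝒢_{k-1} is almost surely continuous. Then the random variables U_k = F_k(Y_k), k = 1, 2, …, are i.i.d. with uniform distribution on [0,1]. -/
open MeasureTheory Filter Set Finset

lemma pit_setIntegral {Ω : Type*} {𝔊 m0 : MeasurableSpace Ω} (hm : 𝔊 ≤ m0)
    (μ : Measure Ω) [IsProbabilityMeasure μ]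
    {Y : Ω → ℝ} (hY : Measurable Y) {G : Ω → ℝ} {x : ℝ}
    (hG : G =ᵐ[μ] μ[({ω | Y ω ≤ x}).indicator (fun _ => (1:ℝ)) | 𝔊])
    {B : Set Ω} (hB : MeasurableSet[𝔊] B) :
    ∫ ω in B, G ω ∂μ = (μ (B ∩ {ω | Y ω ≤ x})).toReal := by
  haveI : SigmaFinite (μ.trim hm) := by infer_instance
  have hYx : MeasurableSet {ω | Y ω ≤ x} := hY measurableSet_Iic
  have hint : Integrable (({ω | Y ω ≤ x}).indicator (fun _ => (1:ℝ))) μ :=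
    (integrable_const (1:ℝ)).indicator hYx
  rw [setIntegral_congr_ae (hm _ hB) (hG.mono fun ω h _ => h),
    setIntegral_condExp hm hint hB]
  rw [integral_indicator_const (1:ℝ) hYx, Measure.real_def, Measure.restrict_apply hYx]
  rw [Set.inter_comm]
  simp

lemma pit_key {Ω : Type*} {𝔊 m0 : MeasurableSpace Ω} (hm : 𝔊 ≤ m0)
    (μ : Measure Ω) [IsProbabilityMeasure μ]
    {Y : Ω → ℝ} (hY : Measurable Y) {F : ℝ → Ω → ℝ}
    (hreg : ∀ᵐ ω ∂μ, Continuous (fun x => F x ω) ∧ Monotone (fun x => F x ω) ∧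
      Tendsto (fun x => F x ω) atBot (nhds 0) ∧ Tendsto (fun x => F x ω) atTop (nhds 1))
    (hcond : ∀ x : ℝ, (fun ω => F x ω) =ᵐ[μ]
      μ[({ω | Y ω ≤ x}).indicator (fun _ => (1:ℝ)) | 𝔊])
    {u : ℝ} (hu0 : 0 < u) (hu1 : u < 1) {A : Set Ω} (hA : MeasurableSet[𝔊] A) :
    μ (A ∩ {ω | F (Y ω) ω ≤ u}) = ENNReal.ofReal u * μ A := by
  classical
  -- the conditional cdf evaluated at rationals, as genuinely 𝔊-measurable functions
  set g : ℚ → Ω → ℝ := fun q ω => (μ[({ω | Y ω ≤ (q:ℝ)}).indicator (fun _ => (1:ℝ)) | 𝔊]) ω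
    with hg_def
  have hgmeas : ∀ q, Measurable[𝔊] (g q) := fun q => stronglyMeasurable_condExp.measurable
  -- the "regular" event
  set M : Set Ω := {ω | (∀ q r : ℚ, q ≤ r → g q ω ≤ g r ω) ∧ (∀ q, g q ω ∈ Set.Icc (0:ℝ) 1)
      ∧ (∃ q, g q ω < u) ∧ (∃ q, u < g q ω)} with hM_def
  have hMmeas : MeasurableSet[𝔊] M := by
    have : M = ((⋂ (q : ℚ) (r : ℚ) (_ : q ≤ r), {ω | g q ω ≤ g r ω}) ∩
        ((⋂ q : ℚ, ({ω | 0 ≤ g q ω} ∩ {ω | g q ω ≤ 1})) ∩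
        ((⋃ q : ℚ, {ω | g q ω < u}) ∩ (⋃ q : ℚ, {ω | u < g q ω})))) := by
      ext ω
      simp only [hM_def, Set.mem_setOf_eq, Set.mem_inter_iff, Set.mem_iInter, Set.mem_iUnion,
        Set.mem_Icc]
    rw [this]
    refine MeasurableSet.inter ?_ (MeasurableSet.inter ?_ (MeasurableSet.inter ?_ ?_))
    · exact MeasurableSet.iInter fun q => MeasurableSet.iInter fun r => MeasurableSet.iInter
        fun _ => measurableSet_le (hgmeas q) (hgmeas r)
    · exact MeasurableSet.iInter fun q =>
        (measurableSet_le measurable_const (hgmeas q)).inter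
          (measurableSet_le (hgmeas q) measurable_const)
    · exact MeasurableSet.iUnion fun q => measurableSet_lt (hgmeas q) measurable_const
    · exact MeasurableSet.iUnion fun q => measurableSet_lt measurable_const (hgmeas q)
  -- corrected version
  set δ : ℚ → ℝ := fun q => min 1 (max 0 (q:ℝ)) with hδ_def
  set g' : ℚ → Ω → ℝ := fun q ω => if ω ∈ M then g q ω else δ q with hg'_def
  have hg'meas : ∀ q, Measurable[𝔊] (g' q) := fun q =>
    Measurable.ite hMmeas (hgmeas q) measurable_const
  have P1 : ∀ ω, ∀ q r : ℚ, q ≤ r → g' q ω ≤ g' r ω := by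
    intro ω q r hqr
    by_cases h : ω ∈ M
    · simpa [hg'_def, h] using (hM_def ▸ h : ω ∈ M).1 q r hqr
    · simp only [hg'_def, h, if_false, hδ_def]
      have : (q:ℝ) ≤ (r:ℝ) := by exact_mod_cast hqr
      exact min_le_min le_rfl (max_le_max le_rfl this)
  have P2 : ∀ ω (q : ℚ), g' q ω ∈ Set.Icc (0:ℝ) 1 := by
    intro ω q
    by_cases h : ω ∈ M
    · simpa [hg'_def, h] using (hM_def ▸ h : ω ∈ M).2.1 q
    · simp only [hg'_def, h, if_false, hδ_def]
      constructor
      · exact le_min (by norm_num) (le_max_left _ _)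
      · exact min_le_left _ _
  have P3 : ∀ ω, ∃ q : ℚ, g' q ω < u := by
    intro ω
    by_cases h : ω ∈ M
    · obtain ⟨q, hq⟩ := (hM_def ▸ h : ω ∈ M).2.2.1
      exact ⟨q, by simpa [hg'_def, h] using hq⟩
    · refine ⟨-1, ?_⟩
      simp only [hg'_def, h, if_false, hδ_def]
      norm_num [hu0]
  have P4 : ∀ ω, ∃ q : ℚ, u < g' q ω := by
    intro ω
    by_cases h : ω ∈ M
    · obtain ⟨q, hq⟩ := (hM_def ▸ h : ω ∈ M).2.2.2
      exact ⟨q, by simpa [hg'_def, h] using hq⟩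
    · refine ⟨1, ?_⟩
      simp only [hg'_def, h, if_false, hδ_def]
      norm_num [hu1]
  -- a.e. ω is regular and F agrees with g' on the rationals
  have hGood : ∀ᵐ ω ∂μ, (Continuous (fun x => F x ω) ∧ Monotone (fun x => F x ω) ∧
      Tendsto (fun x => F x ω) atBot (nhds 0) ∧ Tendsto (fun x => F x ω) atTop (nhds 1))
      ∧ ∀ q : ℚ, F (q:ℝ) ω = g' q ω := by
    have hq : ∀ᵐ ω ∂μ, ∀ q : ℚ, F (q:ℝ) ω = g q ω :=
      (ae_all_iff).mpr fun q => hcond (q:ℝ)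
    filter_upwards [hreg, hq] with ω hr he
    refine ⟨hr, ?_⟩
    obtain ⟨hcont, hmono, htb, htt⟩ := hr
    have hωM : ω ∈ M := by
      refine ⟨?_, ?_, ?_, ?_⟩
      · intro q r hqr
        rw [← he q, ← he r]
        exact hmono (by exact_mod_cast hqr)
      · intro q
        rw [← he q]
        constructor
        · exact le_of_tendsto htb (eventually_atBot.mpr ⟨(q:ℝ), fun y hy => hmono hy⟩)
        · exact ge_of_tendsto htt (eventually_atTop.mpr ⟨(q:ℝ), fun y hy => hmono hy⟩)
      · obtain ⟨y, hy⟩ := (htb.eventually_lt_const hu0).exists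
        obtain ⟨q, hq'⟩ := exists_rat_lt y
        exact ⟨q, by rw [← he q]; exact lt_of_le_of_lt (hmono hq'.le) hy⟩
      · obtain ⟨y, hy⟩ := (htt.eventually_const_lt hu1).exists
        obtain ⟨q, hq'⟩ := exists_rat_gt y
        exact ⟨q, by rw [← he q]; exact lt_of_lt_of_le hy (hmono hq'.le)⟩
    intro q
    rw [he q]
    simp [hg'_def, hωM]
  -- dyadic grid
  set dm : ℕ → ℤ → ℚ := fun m j => (j : ℚ) / 2 ^ m with hdm_def
  have hdm_mono : ∀ m : ℕ, Monotone (dm m) := by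
    intro m j j' hj
    simp only [hdm_def]
    gcongr
  -- greatest dyadic index with g' ≤ u
  have hex : ∀ (m : ℕ) (ω : Ω), ∃ j : ℤ, (g' (dm m j) ω ≤ u ∧ u < g' (dm m (j+1)) ω)
      ∧ ∀ z : ℤ, g' (dm m z) ω ≤ u → z ≤ j := by
    intro m ω
    obtain ⟨q, hq⟩ := P3 ω
    obtain ⟨r, hr⟩ := P4 ω
    have Hinh : ∃ j : ℤ, g' (dm m j) ω ≤ u := by
      refine ⟨⌊q * 2 ^ m⌋, ?_⟩
      have hle : dm m ⌊q * 2 ^ m⌋ ≤ q := by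
        simp only [hdm_def]
        rw [div_le_iff₀ (by positivity)]
        exact Int.floor_le _
      exact le_trans (P1 ω _ _ hle) hq.le
    have Hbdd : ∃ b : ℤ, ∀ z : ℤ, g' (dm m z) ω ≤ u → z ≤ b := by
      refine ⟨⌈r * 2 ^ m⌉, ?_⟩
      intro z hz
      have hzr : dm m z ≤ r := by
        by_contra hlt
        push_neg at hlt
        have h1 := P1 ω r (dm m z) hlt.le
        linarith
      have h2 : (z:ℚ) ≤ r * 2 ^ m := by
        rw [hdm_def] at hzr
        simpa using (div_le_iff₀ (by positivity : (0:ℚ) < 2 ^ m)).mp hzr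
      exact_mod_cast h2.trans (Int.le_ceil _)
    obtain ⟨j, hj1, hj2⟩ := Int.exists_greatest_of_bdd Hbdd Hinh
    refine ⟨j, ⟨hj1, ?_⟩, hj2⟩
    by_contra hle
    push_neg at hle
    have := hj2 (j+1) hle
    omega
  choose jfun hjspec hjmax using hex
  have hjchar : ∀ (m : ℕ) (ω : Ω) (j : ℤ),
      (g' (dm m j) ω ≤ u ∧ u < g' (dm m (j+1)) ω) → jfun m ω = j := by
    rintro m ω j ⟨h1, h2⟩
    have hle : j ≤ jfun m ω := hjmax m ω j h1
    have hge : jfun m ω ≤ j := by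
      by_contra hlt
      push_neg at hlt
      have hj1 : j + 1 ≤ jfun m ω := hlt
      have hmle := P1 ω (dm m (j+1)) (dm m (jfun m ω)) (hdm_mono m hj1)
      have hsp := (hjspec m ω).1
      linarith
    omega
  have hjmeas : ∀ m, Measurable[𝔊] (jfun m) := by
    intro m
    refine @measurable_to_countable' ℤ Ω _ _ 𝔊 (jfun m) fun j => ?_
    have hpre : jfun m ⁻¹' {j} = {ω | g' (dm m j) ω ≤ u} ∩ {ω | u < g' (dm m (j+1)) ω} := by
      ext ω
      simp only [Set.mem_preimage, Set.mem_singleton_iff, Set.mem_inter_iff, Set.mem_setOf_eq]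
      constructor
      · rintro rfl; exact hjspec m ω
      · intro h; exact hjchar m ω j h
    rw [hpre]
    exact (measurableSet_le (hg'meas _) measurable_const).inter
      (measurableSet_lt measurable_const (hg'meas _))
  -- the dyadic upper approximations
  set c : ℕ → Ω → ℝ := fun m ω => ((jfun m ω : ℝ) + 1) / 2 ^ m with hc_def
  have hcmeas : ∀ m, Measurable[𝔊] (c m) := by
    intro m
    exact (((measurable_of_countable (fun j : ℤ => (j:ℝ))).comp (hjmeas m)).add_const 1).div_const _
  have hcastc : ∀ (m : ℕ) (ω : Ω), ((dm m (jfun m ω + 1) : ℚ) : ℝ) = c m ω := by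
    intro m ω; simp only [hdm_def, hc_def]; push_cast; ring
  have hcastc2 : ∀ (m : ℕ) (ω : Ω), ((dm m (jfun m ω) : ℚ) : ℝ) = c m ω - 1/2^m := by
    intro m ω; simp only [hdm_def, hc_def]; push_cast; ring
  have hcsucc : ∀ (ω : Ω) (m : ℕ), c (m+1) ω ≤ c m ω := by
    intro ω m
    have hkey : jfun (m+1) ω + 1 ≤ 2 * (jfun m ω + 1) := by
      by_contra hlt
      push_neg at hlt
      have h2 : 2 * (jfun m ω + 1) ≤ jfun (m+1) ω := by omega
      have heq2 : dm m (jfun m ω + 1) = dm (m+1) (2 * (jfun m ω + 1)) := by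
        simp only [hdm_def]
        push_cast
        rw [div_eq_div_iff (by positivity) (by positivity)]
        ring
      have hmle := P1 ω _ _ (hdm_mono (m+1) h2)
      rw [← heq2] at hmle
      have hs1 := (hjspec m ω).2
      have hs2 := (hjspec (m+1) ω).1
      linarith
    simp only [hc_def]
    rw [div_le_div_iff₀ (by positivity) (by positivity), pow_succ]
    have hc2 : ((jfun (m+1) ω : ℝ) + 1) ≤ 2 * ((jfun m ω : ℝ) + 1) := by exact_mod_cast hkey
    nlinarith [pow_pos (by norm_num : (0:ℝ) < 2) m]
  -- g' is a version of the conditional probability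
  have hg'cond : ∀ q : ℚ,
      (g' q) =ᵐ[μ] μ[({ω | Y ω ≤ (q:ℝ)}).indicator (fun _ => (1:ℝ)) | 𝔊] := by
    intro q
    have h1 : (fun ω => F (q:ℝ) ω) =ᵐ[μ] g' q := by
      filter_upwards [hGood] with ω h using (h.2 q)
    exact h1.symm.trans (hcond (q:ℝ))
  -- the approximating events
  set E : ℕ → Set Ω := fun m => {ω | Y ω ≤ c m ω} with hE_def
  have hEmeas : ∀ m, MeasurableSet (E m) := fun m =>
    measurableSet_le hY ((hcmeas m).mono hm le_rfl)
  have hEanti : Antitone E := antitone_nat_of_succ_le fun m ω hω =>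
    le_trans hω (hcsucc ω m)
  set B : ℕ → ℤ → Set Ω := fun m j => A ∩ {ω | jfun m ω = j} with hB_def
  have hBmeas : ∀ m j, MeasurableSet[𝔊] (B m j) := fun m j =>
    hA.inter ((hjmeas m) (measurableSet_singleton j))
  have hAunion : ∀ m, A = ⋃ j : ℤ, B m j := by
    intro m
    ext ω
    constructor
    · intro h
      exact Set.mem_iUnion.mpr ⟨jfun m ω, h, rfl⟩
    · intro h
      obtain ⟨j, hj⟩ := Set.mem_iUnion.mp h
      exact hj.1
  have hdisj : ∀ m, Pairwise (Function.onFun Disjoint (B m)) := by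
    intro m j j' hne
    apply Set.disjoint_left.mpr
    rintro ω ⟨-, hj⟩ ⟨-, hj'⟩
    exact hne (by rw [← hj, ← hj'])
  have hAE : ∀ m, A ∩ E m = ⋃ j : ℤ, (B m j ∩ {ω | Y ω ≤ ((j:ℝ)+1)/2^m}) := by
    intro m
    ext ω
    constructor
    · rintro ⟨hAω, hEω⟩
      refine Set.mem_iUnion.mpr ⟨jfun m ω, ⟨⟨hAω, rfl⟩, ?_⟩⟩
      exact hEω
    · intro h
      obtain ⟨j, ⟨⟨hAω, hj⟩, hYω⟩⟩ := Set.mem_iUnion.mp h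
      refine ⟨hAω, ?_⟩
      show Y ω ≤ c m ω
      simp only [hc_def]
      rw [show jfun m ω = j from hj]
      exact hYω
  -- the conditional probability of the approximating events
  set φ : ℕ → Ω → ℝ := fun m ω => g' (dm m (jfun m ω + 1)) ω with hφ_def
  have hφmeas : ∀ m, Measurable[𝔊] (φ m) := by
    intro m
    exact (measurable_from_prod_countable_left
        (f := fun p : Ω × ℤ => g' (dm m (p.2 + 1)) p.1)
        (fun j : ℤ => hg'meas (dm m (j + 1)))).comp
      ((@measurable_id Ω 𝔊).prodMk (hjmeas m))
  have hφbdd : ∀ m ω, ‖φ m ω‖ ≤ 1 := by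
    intro m ω
    have h2 := P2 ω (dm m (jfun m ω + 1))
    rw [Real.norm_eq_abs, abs_le]
    exact ⟨by linarith [h2.1], h2.2⟩
  have hφint : ∀ m, Integrable (φ m) μ := by
    intro m
    refine ⟨(((hφmeas m).mono hm le_rfl)).aestronglyMeasurable, ?_⟩
    exact HasFiniteIntegral.of_bounded (C := 1) (Eventually.of_forall (hφbdd m))
  have hstep : ∀ m, (μ (A ∩ E m)).toReal = ∫ ω in A, φ m ω ∂μ := by
    intro m
    have hcast : ∀ j : ℤ, ((dm m (j+1) : ℚ) : ℝ) = ((j:ℝ)+1)/2^m := by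
      intro j; simp only [hdm_def]; push_cast; ring
    have hmeasure : μ (A ∩ E m) = ∑' j : ℤ, μ (B m j ∩ {ω | Y ω ≤ ((j:ℝ)+1)/2^m}) := by
      rw [hAE m]
      refine measure_iUnion ?_ ?_
      · intro j j' hne
        exact (hdisj m hne).mono Set.inter_subset_left Set.inter_subset_left
      · intro j
        exact (hm _ (hBmeas m j)).inter (hY measurableSet_Iic)
    have hterm : ∀ j : ℤ, (μ (B m j ∩ {ω | Y ω ≤ ((j:ℝ)+1)/2^m})).toReal
        = ∫ ω in B m j, φ m ω ∂μ := by
      intro j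
      have h1 : ∫ ω in B m j, g' (dm m (j+1)) ω ∂μ
          = (μ (B m j ∩ {ω | Y ω ≤ ((j:ℝ)+1)/2^m})).toReal := by
        refine pit_setIntegral hm μ hY ?_ (hBmeas m j)
        rw [← hcast j]
        exact hg'cond (dm m (j+1))
      rw [← h1]
      apply setIntegral_congr_fun (hm _ (hBmeas m j))
      intro ω hω
      simp only [hφ_def]
      rw [show jfun m ω = j from hω.2]
    have hsum : ∫ ω in A, φ m ω ∂μ = ∑' j : ℤ, ∫ ω in B m j, φ m ω ∂μ := by
      rw [hAunion m]
      exact integral_iUnion (fun j => hm _ (hBmeas m j)) (hdisj m)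
        ((hφint m).integrableOn)
    rw [hmeasure, hsum, ENNReal.tsum_toReal_eq (fun j => measure_ne_top μ _)]
    exact tsum_congr hterm
  -- identification of the limit event
  have hinter : μ (A ∩ {ω | F (Y ω) ω ≤ u}) = μ (⋂ m, A ∩ E m) := by
    apply measure_congr
    filter_upwards [hGood] with ω hG'
    obtain ⟨⟨hcont, hmono, htb, htt⟩, heq⟩ := hG'
    show (ω ∈ A ∩ {ω | F (Y ω) ω ≤ u}) = (ω ∈ ⋂ m, A ∩ E m)
    simp only [eq_iff_iff, Set.mem_inter_iff, Set.mem_iInter, Set.mem_setOf_eq]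
    constructor
    · rintro ⟨hAω, hU⟩ m
      refine ⟨hAω, ?_⟩
      show Y ω ≤ c m ω
      by_contra hlt
      push_neg at hlt
      have h2 := (hjspec m ω).2
      rw [← heq _, hcastc m ω] at h2
      exact absurd (le_trans (hmono hlt.le) hU) (not_le.mpr h2)
    · intro h
      refine ⟨(h 0).1, ?_⟩
      by_contra hU
      push_neg at hU
      obtain ⟨ε, hε, hball⟩ := Metric.eventually_nhds_iff.mp
        ((hcont.tendsto (Y ω)).eventually_const_lt hU)
      obtain ⟨m, hmε⟩ := exists_pow_lt_of_lt_one hε (by norm_num : (1:ℝ)/2 < 1)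
      have hmε' : (1:ℝ)/2^m < ε := by rwa [one_div_pow] at hmε
      have hFy : F (c m ω - 1/2^m) ω ≤ u := by
        have h1 := (hjspec m ω).1
        rwa [← heq _, hcastc2 m ω] at h1
      have hYc : Y ω ≤ c m ω := (h m).2
      rcases le_or_gt (Y ω) (c m ω - 1/2^m) with hy | hy
      · exact absurd (le_trans (hmono hy) hFy) (not_le.mpr hU)
      · have hdist : dist (c m ω - 1/2^m) (Y ω) < ε := by
          rw [Real.dist_eq, abs_lt]
          constructor <;> [linarith; linarith [pow_pos (by norm_num : (0:ℝ) < 2) m]]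
        exact absurd (hball hdist) (not_lt.mpr hFy)
  -- a.e. convergence of the conditional probabilities to u
  have hφu : ∀ᵐ ω ∂μ, Tendsto (fun m => φ m ω) atTop (nhds u) := by
    filter_upwards [hGood] with ω hG'
    obtain ⟨⟨hcont, hmono, htb, htt⟩, heq⟩ := hG'
    have hcanti : Antitone (fun m => c m ω) := antitone_nat_of_succ_le fun m => hcsucc ω m
    obtain ⟨x₁, hx₁⟩ := (htb.eventually_lt_const hu0).exists
    have hlb : ∀ m, x₁ ≤ c m ω := by
      intro m
      by_contra hlt
      push_neg at hlt
      have h2 := (hjspec m ω).2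
      rw [← heq _, hcastc m ω] at h2
      have h3 := hmono hlt.le
      linarith
    have hbdd : BddBelow (Set.range fun m => c m ω) := by
      refine ⟨x₁, ?_⟩
      rintro y ⟨m, rfl⟩
      exact hlb m
    have hctend : Tendsto (fun m => c m ω) atTop (nhds (⨅ m, c m ω)) :=
      tendsto_atTop_ciInf hcanti hbdd
    set L := ⨅ m, c m ω with hL_def
    have hpow : Tendsto (fun m : ℕ => (1:ℝ)/2^m) atTop (nhds 0) := by
      have := tendsto_pow_atTop_nhds_zero_of_lt_one
        (by norm_num : (0:ℝ) ≤ 1/2) (by norm_num : (1:ℝ)/2 < 1)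
      simpa [one_div_pow] using this
    have hc2tend : Tendsto (fun m => c m ω - 1/2^m) atTop (nhds L) := by
      simpa using hctend.sub hpow
    have hFc : Tendsto (fun m => F (c m ω) ω) atTop (nhds (F L ω)) :=
      (hcont.tendsto L).comp hctend
    have hFc2 : Tendsto (fun m => F (c m ω - 1/2^m) ω) atTop (nhds (F L ω)) :=
      (hcont.tendsto L).comp hc2tend
    have hle1 : ∀ m, F (c m ω - 1/2^m) ω ≤ u := by
      intro m
      have h1 := (hjspec m ω).1
      rwa [← heq _, hcastc2 m ω] at h1
    have hge1 : ∀ m, u ≤ F (c m ω) ω := by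
      intro m
      have h2 := (hjspec m ω).2
      rw [← heq _, hcastc m ω] at h2
      exact h2.le
    have hFL : F L ω = u :=
      le_antisymm (le_of_tendsto hFc2 (Eventually.of_forall hle1))
        (ge_of_tendsto hFc (Eventually.of_forall hge1))
    have hφeq : (fun m => φ m ω) = fun m => F (c m ω) ω := by
      funext m
      simp only [hφ_def]
      rw [← heq _, hcastc m ω]
    rw [hφeq, ← hFL]
    exact hFc
  -- pass to the limit
  have hlimL : Tendsto (fun m => (μ (A ∩ E m)).toReal) atTop
      (nhds ((μ (⋂ m, A ∩ E m)).toReal)) := by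
    refine (ENNReal.tendsto_toReal (measure_ne_top μ _)).comp ?_
    refine tendsto_measure_iInter_atTop
      (fun m => ((hm _ hA).inter (hEmeas m)).nullMeasurableSet)
      (fun m m' hmm' => Set.inter_subset_inter_right _ (hEanti hmm'))
      ⟨0, measure_ne_top μ _⟩
  have hlimR : Tendsto (fun m => ∫ ω in A, φ m ω ∂μ) atTop
      (nhds (u * (μ A).toReal)) := by
    have hDCT := tendsto_integral_of_dominated_convergence (μ := μ.restrict A)
      (F := fun m => φ m) (f := fun _ => u) (bound := fun _ => 1)
      (fun m => (((hφmeas m).mono hm le_rfl)).aestronglyMeasurable)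
      (integrable_const 1)
      (fun m => Eventually.of_forall (hφbdd m))
      (ae_restrict_of_ae hφu)
    simpa [setIntegral_const, smul_eq_mul, mul_comm, Measure.real_def] using hDCT
  have hmain : (μ (⋂ m, A ∩ E m)).toReal = u * (μ A).toReal := by
    refine tendsto_nhds_unique ?_ hlimR
    have : (fun m => (μ (A ∩ E m)).toReal) = fun m => ∫ ω in A, φ m ω ∂μ := funext hstep
    rw [← this]
    exact hlimL
  rw [hinter]
  refine (ENNReal.toReal_eq_toReal_iff' (measure_ne_top μ _)
    (ENNReal.mul_ne_top ENNReal.ofReal_ne_top (measure_ne_top μ _))).mp ?_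
  rw [hmain, ENNReal.toReal_mul, ENNReal.toReal_ofReal hu0.le]

lemma pit_key' {Ω : Type*} {𝔊 m0 : MeasurableSpace Ω} (hm : 𝔊 ≤ m0)
    (μ : Measure Ω) [IsProbabilityMeasure μ]
    {Y : Ω → ℝ} (hY : Measurable Y) {F : ℝ → Ω → ℝ}
    (hreg : ∀ᵐ ω ∂μ, Continuous (fun x => F x ω) ∧ Monotone (fun x => F x ω) ∧
      Tendsto (fun x => F x ω) atBot (nhds 0) ∧ Tendsto (fun x => F x ω) atTop (nhds 1))
    (hcond : ∀ x : ℝ, (fun ω => F x ω) =ᵐ[μ]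
      μ[({ω | Y ω ≤ x}).indicator (fun _ => (1:ℝ)) | 𝔊])
    {u : ℝ} (hu0 : 0 ≤ u) (hu1 : u ≤ 1) {A : Set Ω} (hA : MeasurableSet[𝔊] A) :
    μ (A ∩ {ω | F (Y ω) ω ≤ u}) = ENNReal.ofReal u * μ A := by
  rcases eq_or_lt_of_le hu0 with h0 | h0
  · -- u = 0
    have hZ : ∀ n : ℕ, μ {ω | F (Y ω) ω ≤ u} ≤ ENNReal.ofReal (1/(n+2)) := by
      intro n
      have hn0 : (0:ℝ) < (n:ℝ) + 2 := by positivity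
      have hlt0 : (0:ℝ) < 1/((n:ℝ)+2) := by positivity
      have hlt1 : (1:ℝ)/((n:ℝ)+2) < 1 := by
        rw [div_lt_one hn0]
        have : (0:ℝ) ≤ (n:ℝ) := Nat.cast_nonneg n
        linarith
      have hkey := pit_key hm μ hY hreg hcond hlt0 hlt1 (MeasurableSet.univ (α := Ω))
      calc μ {ω | F (Y ω) ω ≤ u}
          ≤ μ (Set.univ ∩ {ω | F (Y ω) ω ≤ 1/((n:ℝ)+2)}) := by
            apply measure_mono
            intro ω hω
            exact ⟨trivial, le_trans hω (show u ≤ 1/((n:ℝ)+2) by rw [← h0]; exact hlt0.le)⟩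
        _ = ENNReal.ofReal (1/((n:ℝ)+2)) * μ Set.univ := hkey
        _ = ENNReal.ofReal (1/((n:ℝ)+2)) := by simp
    have hZ0 : μ {ω | F (Y ω) ω ≤ u} = 0 := by
      refine le_antisymm ?_ zero_le
      have htend0 : Tendsto (fun n : ℕ => (1:ℝ)/((n:ℝ)+2)) atTop (nhds 0) := by
        refine squeeze_zero (fun n => by positivity)
          (fun n => ?_) tendsto_one_div_add_atTop_nhds_zero_nat
        refine one_div_le_one_div_of_le (by positivity) (by push_cast; linarith)
      have htend : Tendsto (fun n : ℕ => ENNReal.ofReal ((1:ℝ)/((n:ℝ)+2))) atTop (nhds 0) := by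
        have := ENNReal.tendsto_ofReal htend0
        simpa using this
      exact ge_of_tendsto htend (Eventually.of_forall hZ)
    have hz : μ (A ∩ {ω | F (Y ω) ω ≤ u}) = 0 :=
      le_antisymm (le_trans (measure_mono Set.inter_subset_right) hZ0.le) zero_le
    rw [hz, ← h0]
    simp
  rcases eq_or_lt_of_le hu1 with h1 | h1
  · -- u = 1
    have hae : ∀ᵐ ω ∂μ, F (Y ω) ω ≤ u := by
      filter_upwards [hreg] with ω hω
      obtain ⟨hcont, hmono, htb, htt⟩ := hω
      rw [h1]
      exact ge_of_tendsto htt (eventually_atTop.mpr ⟨Y ω, fun y hy => hmono hy⟩)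
    have heqA : (A ∩ {ω | F (Y ω) ω ≤ u} : Set Ω) =ᵐ[μ] (A : Set Ω) := by
      filter_upwards [hae] with ω hω
      show (ω ∈ A ∩ {ω | F (Y ω) ω ≤ u}) = (ω ∈ A)
      simp only [eq_iff_iff, Set.mem_inter_iff, Set.mem_setOf_eq]
      exact and_iff_left hω
    rw [measure_congr heqA, h1]
    simp
  · exact pit_key hm μ hY hreg hcond h0 h1 hA

lemma pit_version {Ω : Type*} {𝔊 𝔊' m0 : MeasurableSpace Ω} (hm : 𝔊 ≤ m0) (hle : 𝔊 ≤ 𝔊')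
    (μ : Measure Ω) [IsProbabilityMeasure μ]
    {Y : Ω → ℝ} (hY : Measurable[𝔊'] Y) {F : ℝ → Ω → ℝ}
    (hreg : ∀ᵐ ω ∂μ, Continuous (fun x => F x ω) ∧ Monotone (fun x => F x ω) ∧
      Tendsto (fun x => F x ω) atBot (nhds 0) ∧ Tendsto (fun x => F x ω) atTop (nhds 1))
    (hcond : ∀ x : ℝ, (fun ω => F x ω) =ᵐ[μ]
      μ[({ω | Y ω ≤ x}).indicator (fun _ => (1:ℝ)) | 𝔊]) :
    ∃ V : Ω → ℝ, Measurable[𝔊'] V ∧ V =ᵐ[μ] fun ω => F (Y ω) ω := by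
  classical
  set g : ℚ → Ω → ℝ := fun q ω => (μ[({ω | Y ω ≤ (q:ℝ)}).indicator (fun _ => (1:ℝ)) | 𝔊]) ω
    with hg_def
  have hgmeas : ∀ q, Measurable[𝔊] (g q) := fun q => stronglyMeasurable_condExp.measurable
  set M : Set Ω := {ω | (∀ q r : ℚ, q ≤ r → g q ω ≤ g r ω) ∧ ∀ q, g q ω ∈ Set.Icc (0:ℝ) 1}
    with hM_def
  have hMmeas : MeasurableSet[𝔊] M := by
    have hMeq : M = ((⋂ (q : ℚ) (r : ℚ) (_ : q ≤ r), {ω | g q ω ≤ g r ω}) ∩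
        (⋂ q : ℚ, ({ω | 0 ≤ g q ω} ∩ {ω | g q ω ≤ 1}))) := by
      ext ω
      simp only [hM_def, Set.mem_setOf_eq, Set.mem_inter_iff, Set.mem_iInter, Set.mem_Icc]
    rw [hMeq]
    refine MeasurableSet.inter ?_ ?_
    · exact MeasurableSet.iInter fun q => MeasurableSet.iInter fun r => MeasurableSet.iInter
        fun _ => measurableSet_le (hgmeas q) (hgmeas r)
    · exact MeasurableSet.iInter fun q =>
        (measurableSet_le measurable_const (hgmeas q)).inter
          (measurableSet_le (hgmeas q) measurable_const)
  set δ : ℚ → ℝ := fun q => min 1 (max 0 (q:ℝ)) with hδ_def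
  set g' : ℚ → Ω → ℝ := fun q ω => if ω ∈ M then g q ω else δ q with hg'_def
  have hg'meas : ∀ q, Measurable[𝔊] (g' q) := fun q =>
    Measurable.ite hMmeas (hgmeas q) measurable_const
  have P2 : ∀ ω (q : ℚ), g' q ω ∈ Set.Icc (0:ℝ) 1 := by
    intro ω q
    by_cases h : ω ∈ M
    · simpa [hg'_def, h] using (hM_def ▸ h : ω ∈ M).2 q
    · simp only [hg'_def, h, if_false, hδ_def]
      exact ⟨le_min (by norm_num) (le_max_left _ _), min_le_left _ _⟩
  have hGood : ∀ᵐ ω ∂μ, (Continuous (fun x => F x ω) ∧ Monotone (fun x => F x ω) ∧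
      Tendsto (fun x => F x ω) atBot (nhds 0) ∧ Tendsto (fun x => F x ω) atTop (nhds 1))
      ∧ ∀ q : ℚ, F (q:ℝ) ω = g' q ω := by
    have hq : ∀ᵐ ω ∂μ, ∀ q : ℚ, F (q:ℝ) ω = g q ω :=
      (ae_all_iff).mpr fun q => hcond (q:ℝ)
    filter_upwards [hreg, hq] with ω hr he
    refine ⟨hr, ?_⟩
    obtain ⟨hcont, hmono, htb, htt⟩ := hr
    have hωM : ω ∈ M := by
      refine ⟨?_, ?_⟩
      · intro q r hqr
        rw [← he q, ← he r]
        exact hmono (by exact_mod_cast hqr)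
      · intro q
        rw [← he q]
        constructor
        · exact le_of_tendsto htb (eventually_atBot.mpr ⟨(q:ℝ), fun y hy => hmono hy⟩)
        · exact ge_of_tendsto htt (eventually_atTop.mpr ⟨(q:ℝ), fun y hy => hmono hy⟩)
    intro q
    rw [he q]
    simp [hg'_def, hωM]
  refine ⟨fun ω => ⨅ q : ℚ, if Y ω < (q:ℝ) then g' q ω else 1, ?_, ?_⟩
  · refine Measurable.iInf fun q => ?_
    exact Measurable.ite (measurableSet_lt hY measurable_const)
      ((hg'meas q).mono hle le_rfl) measurable_const
  · filter_upwards [hGood] with ω hG'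
    obtain ⟨⟨hcont, hmono, htb, htt⟩, heq⟩ := hG'
    have ha1 : F (Y ω) ω ≤ 1 :=
      ge_of_tendsto htt (eventually_atTop.mpr ⟨Y ω, fun y hy => hmono hy⟩)
    have hlbd : ∀ q : ℚ, F (Y ω) ω ≤ (if Y ω < (q:ℝ) then g' q ω else 1) := by
      intro q
      split_ifs with h
      · rw [← heq q]; exact hmono h.le
      · exact ha1
    have hbdd : BddBelow (Set.range fun q : ℚ => if Y ω < (q:ℝ) then g' q ω else 1) := by
      refine ⟨0, ?_⟩
      rintro x ⟨q, rfl⟩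
      dsimp only
      split_ifs with h
      · exact (P2 ω q).1
      · norm_num
    refine le_antisymm ?_ (le_ciInf hlbd)
    by_contra hlt
    push_neg at hlt
    obtain ⟨ε, hε, hball⟩ := Metric.eventually_nhds_iff.mp
      ((hcont.tendsto (Y ω)).eventually_lt_const hlt)
    obtain ⟨q, hq1, hq2⟩ := exists_rat_btwn (lt_add_of_pos_right (Y ω) hε)
    have hdist : dist ((q:ℝ)) (Y ω) < ε := by
      rw [Real.dist_eq, abs_lt]
      constructor <;> linarith
    have hFq := hball hdist
    have hile : (⨅ q : ℚ, if Y ω < (q:ℝ) then g' q ω else 1)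
        ≤ (if Y ω < (q:ℝ) then g' q ω else 1) := ciInf_le hbdd q
    rw [if_pos hq1, ← heq q] at hile
    linarith

theorem pit_iid_uniform {Ω : Type*} {m0 : MeasurableSpace Ω}
    (μ : Measure Ω) [IsProbabilityMeasure μ]
    (𝒢 : ℕ → MeasurableSpace Ω) (h𝒢 : ∀ k, 𝒢 k ≤ m0) (hmono : Monotone 𝒢)
    (Y : ℕ → Ω → ℝ) (hadapt : ∀ k, 1 ≤ k → Measurable[𝒢 k] (Y k))
    (F : ℕ → ℝ → Ω → ℝ)
    -- for a.e. ω, F k (·, ω) is a continuous distribution function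
    (hreg : ∀ k, 1 ≤ k → ∀ᵐ ω ∂μ,
      Continuous (fun x => F k x ω) ∧ Monotone (fun x => F k x ω) ∧
      Tendsto (fun x => F k x ω) atBot (nhds 0) ∧
      Tendsto (fun x => F k x ω) atTop (nhds 1))
    -- F k x is a version of the conditional probability P(Y_k ≤ x | 𝒢_{k-1})
    (hcond : ∀ k, 1 ≤ k → ∀ x : ℝ,
      (fun ω => F k x ω) =ᵐ[μ]
        μ[({ω | Y k ω ≤ x}).indicator (fun _ => (1:ℝ)) | 𝒢 (k-1)]) :
    ∀ (n : ℕ) (u : Fin n → ℝ), (∀ i, u i ∈ Set.Icc (0:ℝ) 1) →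
      μ {ω | ∀ i : Fin n, F (i+1) (Y (i+1) ω) ω ≤ u i} =
        ENNReal.ofReal (∏ i, u i) := by
  have hver : ∀ k : ℕ, ∃ V : Ω → ℝ, Measurable[𝒢 (k+1)] V ∧
      V =ᵐ[μ] fun ω => F (k+1) (Y (k+1) ω) ω := by
    intro k
    have h1 : (1:ℕ) ≤ k + 1 := Nat.le_add_left 1 k
    refine pit_version (h𝒢 k) (hmono (Nat.le_succ k)) μ (hadapt (k+1) h1)
      (hreg (k+1) h1) ?_
    intro x
    have h2 := hcond (k+1) h1 x
    rwa [Nat.add_sub_cancel] at h2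
  choose V hVmeas hVae using hver
  have hT : ∀ (n : ℕ) (u : Fin n → ℝ), (∀ i, u i ∈ Set.Icc (0:ℝ) 1) →
      MeasurableSet[𝒢 n] {ω | ∀ i : Fin n, V (i : ℕ) ω ≤ u i} ∧
      μ {ω | ∀ i : Fin n, V (i : ℕ) ω ≤ u i} = ENNReal.ofReal (∏ i, u i) := by
    intro n
    induction n with
    | zero =>
      intro u hu
      have huniv : {ω : Ω | ∀ i : Fin 0, V (i : ℕ) ω ≤ u i} = Set.univ := by
        ext ω; simp
      rw [huniv]
      simp
    | succ n ih =>
      intro u hu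
      obtain ⟨ihm, ihμ⟩ := ih (fun i => u i.castSucc) (fun i => hu i.castSucc)
      have hsplit : {ω | ∀ i : Fin (n+1), V (i : ℕ) ω ≤ u i}
          = {ω | ∀ i : Fin n, V (i : ℕ) ω ≤ u i.castSucc} ∩ {ω | V n ω ≤ u (Fin.last n)} := by
        ext ω
        simp only [Set.mem_setOf_eq, Set.mem_inter_iff]
        rw [Fin.forall_fin_succ']
        simp [Fin.coe_castSucc, Fin.val_last]
      have hlastmeas : MeasurableSet[𝒢 (n+1)] {ω | V n ω ≤ u (Fin.last n)} :=
        measurableSet_le (hVmeas n) measurable_const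
      constructor
      · rw [hsplit]
        exact (hmono (Nat.le_succ n) _ ihm).inter hlastmeas
      · rw [hsplit]
        have hae1 : ({ω | ∀ i : Fin n, V (i : ℕ) ω ≤ u i.castSucc}
              ∩ {ω | V n ω ≤ u (Fin.last n)} : Set Ω) =ᵐ[μ]
            ({ω | ∀ i : Fin n, V (i : ℕ) ω ≤ u i.castSucc}
              ∩ {ω | F (n+1) (Y (n+1) ω) ω ≤ u (Fin.last n)} : Set Ω) := by
          filter_upwards [hVae n] with ω hω
          show (_ ∧ V n ω ≤ u (Fin.last n)) = (_ ∧ F (n+1) (Y (n+1) ω) ω ≤ u (Fin.last n))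
          rw [hω]
        rw [measure_congr hae1]
        have h1 : (1:ℕ) ≤ n + 1 := Nat.le_add_left 1 n
        have hkey := pit_key' (h𝒢 n) μ
          ((hadapt (n+1) h1).mono (h𝒢 (n+1)) le_rfl)
          (hreg (n+1) h1)
          (fun x => by have h2 := hcond (n+1) h1 x; rwa [Nat.add_sub_cancel] at h2)
          (hu (Fin.last n)).1 (hu (Fin.last n)).2 ihm
        rw [hkey, ihμ, Fin.prod_univ_castSucc, ENNReal.ofReal_mul
          (Finset.prod_nonneg fun i _ => (hu i.castSucc).1), mul_comm]
  intro n u hu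
  have haeall : ∀ᵐ ω ∂μ, ∀ k : ℕ, V k ω = F (k+1) (Y (k+1) ω) ω :=
    ae_all_iff.mpr fun k => hVae k
  have hsetae : ({ω | ∀ i : Fin n, F (i+1) (Y (i+1) ω) ω ≤ u i} : Set Ω) =ᵐ[μ]
      ({ω | ∀ i : Fin n, V (i : ℕ) ω ≤ u i} : Set Ω) := by
    filter_upwards [haeall] with ω h
    show (∀ i : Fin n, F (i+1) (Y (i+1) ω) ω ≤ u i) = (∀ i : Fin n, V (i : ℕ) ω ≤ u i)
    rw [eq_iff_iff]
    exact forall_congr' fun i => by rw [h (i : ℕ)]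
  rw [measure_congr hsetae]
  exact (hT n u hu).2
end

section
/- Let F be a distribution function of a random variable Y with E|Y| < ∞, β ∈ (0,1), and let q be any β-quantile of F (i.e., F(x) < β for x < q and F(x) ≥ β for x ≥ q). Define S(x,y) = (1_{x ≥ y} − β)(x − y). Then E[S(q, Y)] ≤ E[S(x, Y)] for every x ∈ ℝ. -/
open MeasureTheory Set

theorem quantile_score_consistent {Ω : Type*} [MeasurableSpace Ω]
    (μ : Measure Ω) [IsProbabilityMeasure μ]
    (Y : Ω → ℝ) (hY : Measurable Y) (hint : Integrable Y μ)
    (β : ℝ) (hβ : β ∈ Set.Ioo (0:ℝ) 1)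
    (q : ℝ)
    (hq1 : ∀ x < q, (μ {ω | Y ω ≤ x}).toReal < β)
    (hq2 : ∀ x ≥ q, (μ {ω | Y ω ≤ x}).toReal ≥ β)
    (S : ℝ → ℝ → ℝ)
    (hS : ∀ x y, S x y = ((if x ≥ y then (1:ℝ) else 0) - β) * (x - y)) :
    ∀ x : ℝ, ∫ ω, S q (Y ω) ∂μ ≤ ∫ ω, S x (Y ω) ∂μ := by
  have hβ0 : (0:ℝ) < β := hβ.1
  have hβ1 : β < 1 := hβ.2
  -- integrability of the score at any point
  have intS : ∀ c : ℝ, Integrable (fun ω => S c (Y ω)) μ := by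
    intro c
    have hmeas : Measurable fun ω => S c (Y ω) := by
      simp only [hS]
      exact (Measurable.sub (Measurable.ite (measurableSet_le hY measurable_const)
        measurable_const measurable_const) measurable_const).mul
        (measurable_const.sub hY)
    refine Integrable.mono' ((integrable_const (|c|)).add hint.abs)
      hmeas.aestronglyMeasurable ?_
    filter_upwards with ω
    rw [hS, Real.norm_eq_abs, abs_mul]
    have h1 : |(if c ≥ Y ω then (1:ℝ) else 0) - β| ≤ 1 := by
      rw [abs_le]; split_ifs <;> constructor <;> linarith
    have h2 : |c - Y ω| ≤ |c| + |Y ω| := by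
      calc |c - Y ω| = |c + -(Y ω)| := by ring_nf
        _ ≤ |c| + |-(Y ω)| := abs_add_le _ _
        _ = |c| + |Y ω| := by rw [abs_neg]
    calc |(if c ≥ Y ω then (1:ℝ) else 0) - β| * |c - Y ω|
        ≤ 1 * (|c| + |Y ω|) := by
          apply mul_le_mul h1 h2 (abs_nonneg _) (by norm_num)
      _ = |c| + |Y ω| := one_mul _
  -- μ {Y < q} ≤ β
  have hBle : (μ {ω | Y ω < q}).toReal ≤ β := by
    have hset : {ω | Y ω < q} = ⋃ n : ℕ, {ω | Y ω ≤ q - 1/(n+1)} := by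
      ext ω
      simp only [mem_setOf_eq, mem_iUnion]
      constructor
      · intro h
        obtain ⟨n, hn⟩ := exists_nat_one_div_lt (sub_pos.mpr h)
        exact ⟨n, by linarith⟩
      · rintro ⟨n, hn⟩
        have hpos : (0:ℝ) < 1/(n+1) := by positivity
        linarith
    have hmono : Monotone fun n : ℕ => {ω | Y ω ≤ q - 1/((n:ℝ)+1)} := by
      intro n m hnm ω hω
      simp only [mem_setOf_eq] at *
      have hcast : (n:ℝ) + 1 ≤ (m:ℝ) + 1 := by exact_mod_cast Nat.succ_le_succ hnm
      have : (1:ℝ)/(m+1) ≤ 1/(n+1) := one_div_le_one_div_of_le (by positivity) hcast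
      linarith
    rw [hset, hmono.directed_le.measure_iUnion]
    have hle : (⨆ n : ℕ, μ {ω | Y ω ≤ q - 1/((n:ℝ)+1)}) ≤ ENNReal.ofReal β := by
      apply iSup_le
      intro n
      have hpos : (0:ℝ) < 1/((n:ℝ)+1) := by positivity
      have h1 : q - 1/((n:ℝ)+1) < q := by linarith
      have h2 := (hq1 _ h1).le
      rw [← ENNReal.ofReal_toReal (measure_ne_top μ {ω | Y ω ≤ q - 1/((n:ℝ)+1)})]
      exact ENNReal.ofReal_le_ofReal h2
    calc (⨆ n : ℕ, μ {ω | Y ω ≤ q - 1/((n:ℝ)+1)}).toReal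
        ≤ (ENNReal.ofReal β).toReal := ENNReal.toReal_mono ENNReal.ofReal_ne_top hle
      _ = β := ENNReal.toReal_ofReal hβ0.le
  intro x
  rcases lt_trichotomy q x with hqx | heq | hxq
  · -- q < x
    rw [← sub_nonneg, ← integral_sub (intS x) (intS q)]
    set A := {ω | Y ω ≤ q} with hA
    have hAm : MeasurableSet A := measurableSet_le hY measurable_const
    have hlowint : Integrable (fun ω => (-β*(x-q)) + A.indicator (fun _ => (x-q)) ω) μ :=
      (integrable_const _).add ((integrable_const _).indicator hAm)
    have hlow : ∀ ω, (-β*(x-q)) + A.indicator (fun _ => (x-q)) ω ≤ S x (Y ω) - S q (Y ω) := by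
      intro ω
      rw [hS, hS]
      by_cases hy : Y ω ≤ q
      · rw [Set.indicator_of_mem (show ω ∈ A from hy)]
        split_ifs <;> nlinarith
      · rw [Set.indicator_of_notMem (show ω ∉ A from hy)]
        push_neg at hy
        split_ifs <;> nlinarith
    have hmain := integral_mono hlowint ((intS x).sub (intS q)) hlow
    refine le_trans ?_ hmain
    rw [integral_add (integrable_const _) ((integrable_const _).indicator hAm),
      integral_const, integral_indicator_const _ hAm, probReal_univ]
    have hF : β ≤ (μ A).toReal := hq2 q le_rfl
    have hμ1 : (μ A).toReal ≤ 1 := by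
      simpa using ENNReal.toReal_mono ENNReal.one_ne_top prob_le_one
    simp only [ENNReal.toReal_one, one_smul, smul_eq_mul, measureReal_def]
    nlinarith
  · rw [heq]
  · -- x < q
    rw [← sub_nonpos, ← integral_sub (intS q) (intS x)]
    set B := {ω | Y ω < q} with hB
    have hBm : MeasurableSet B := measurableSet_lt hY measurable_const
    have hupint : Integrable (fun ω => (-β*(q-x)) + B.indicator (fun _ => (q-x)) ω) μ :=
      (integrable_const _).add ((integrable_const _).indicator hBm)
    have hup : ∀ ω, S q (Y ω) - S x (Y ω) ≤ (-β*(q-x)) + B.indicator (fun _ => (q-x)) ω := by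
      intro ω
      rw [hS, hS]
      by_cases hy : Y ω < q
      · rw [Set.indicator_of_mem (show ω ∈ B from hy)]
        split_ifs <;> nlinarith
      · rw [Set.indicator_of_notMem (show ω ∉ B from hy)]
        push_neg at hy
        split_ifs <;> nlinarith
    have hmain := integral_mono ((intS q).sub (intS x)) hupint hup
    refine le_trans hmain ?_
    rw [integral_add (integrable_const _) ((integrable_const _).indicator hBm),
      integral_const, integral_indicator_const _ hBm, probReal_univ]
    simp only [ENNReal.toReal_one, one_smul, smul_eq_mul, measureReal_def]
    nlinarith
end

section
/- Let Y be an integrable real random variable with distribution function F, β ∈ (0,1), and define Ψ(x) = x + (1/(1−β)) E[(Y − x)^+]. If F is continuous and strictly increasing, then Ψ attains its minimum over ℝ at the β-quantile q_β, and min_x Ψ(x) = Ψ(q_β) = q_β + (1/(1−β)) E[(Y − q_β)^+]. -/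
open MeasureTheory Set

theorem rockafellar_uryasev_min {Ω : Type*} [MeasurableSpace Ω]
    (μ : Measure Ω) [IsProbabilityMeasure μ]
    (Y : Ω → ℝ) (hY : Measurable Y) (hint : Integrable Y μ)
    (β : ℝ) (hβ : β ∈ Set.Ioo (0:ℝ) 1)
    (F : ℝ → ℝ) (hF : ∀ y, F y = (μ {ω | Y ω ≤ y}).toReal)
    (hFc : Continuous F) (hFs : StrictMono F)
    (qβ : ℝ) (hqβ : F qβ = β)
    (Ψ : ℝ → ℝ)
    (hΨ : ∀ x, Ψ x = x + (1/(1-β)) * ∫ ω, max (Y ω - x) 0 ∂μ) :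
    (∀ x : ℝ, Ψ qβ ≤ Ψ x) ∧
    Ψ qβ = qβ + (1/(1-β)) * ∫ ω, max (Y ω - qβ) 0 ∂μ := by
  obtain ⟨hβ0, hβ1⟩ := hβ
  have h1β : (0:ℝ) < 1 - β := by linarith
  refine ⟨?_, hΨ qβ⟩
  intro x
  have hs : MeasurableSet {ω | qβ < Y ω} := measurableSet_lt measurable_const hY
  have hsle : MeasurableSet {ω | Y ω ≤ qβ} := measurableSet_le hY measurable_const
  have hmeas : (μ {ω | qβ < Y ω}).toReal = 1 - β := by
    have hc : {ω | qβ < Y ω} = {ω | Y ω ≤ qβ}ᶜ := by ext ω; simp [not_le]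
    rw [hc, measure_compl hsle (measure_ne_top μ _), measure_univ,
      ENNReal.toReal_sub_of_le prob_le_one ENNReal.one_ne_top]
    have : (μ {ω | Y ω ≤ qβ}).toReal = β := by rw [← hF qβ, hqβ]
    rw [this]; simp
  have hpt : ∀ ω, max (Y ω - qβ) 0
      + {ω | qβ < Y ω}.indicator (fun _ => qβ - x) ω ≤ max (Y ω - x) 0 := by
    intro ω
    by_cases h : qβ < Y ω
    · rw [Set.indicator_of_mem (show ω ∈ {ω | qβ < Y ω} from h), max_eq_left (by linarith : (0:ℝ) ≤ Y ω - qβ)]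
      have : Y ω - qβ + (qβ - x) = Y ω - x := by ring
      rw [this]; exact le_max_left _ _
    · rw [Set.indicator_of_notMem (show ω ∉ {ω | qβ < Y ω} from h),
        max_eq_right (by linarith [not_lt.mp h] : Y ω - qβ ≤ 0)]
      simpa using le_max_right (Y ω - x) 0
  have hiq : Integrable (fun ω => max (Y ω - qβ) 0) μ :=
    (hint.sub (integrable_const qβ)).pos_part
  have hix : Integrable (fun ω => max (Y ω - x) 0) μ :=
    (hint.sub (integrable_const x)).pos_part
  have hind : Integrable ({ω | qβ < Y ω}.indicator (fun _ => qβ - x)) μ :=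
    (integrable_const _).indicator hs
  have hInt : ∫ ω, max (Y ω - qβ) 0 ∂μ + (qβ - x) * (1 - β)
      ≤ ∫ ω, max (Y ω - x) 0 ∂μ := by
    have h : ∫ ω, (max (Y ω - qβ) 0
        + {ω | qβ < Y ω}.indicator (fun _ => qβ - x) ω) ∂μ
        ≤ ∫ ω, max (Y ω - x) 0 ∂μ := integral_mono (hiq.add hind) hix hpt
    rwa [integral_add hiq hind, integral_indicator_const _ hs, measureReal_def, hmeas, smul_eq_mul,
      mul_comm] at h
  have h2 := mul_le_mul_of_nonneg_left hInt (le_of_lt (one_div_pos.mpr h1β))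
  rw [mul_add] at h2
  have h3 : 1/(1-β) * ((qβ - x) * (1-β)) = qβ - x := by field_simp
  rw [h3] at h2
  rw [hΨ x, hΨ qβ]
  linarith
end

section
/- Let S_n = Σ_{k=1}^n X_k be a square-integrable martingale with S_0 = 0, and define ⟨S⟩_n = Σ_{k=1}^n E[X_k² | 𝒢_{k-1}]. Then the martingale W_n = Σ_{k=1}^n X_k/(1 + ⟨S⟩_k) satisfies E[(W_n − W_{n−1})² | 𝒢_{n−1}] ≤ 1/(1+⟨S⟩_{n−1}) − 1/(1+⟨S⟩_n) almost surely, and hence ⟨W⟩_∞ ≤ 1. -/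
open MeasureTheory Filter Finset

lemma aux_frac_ineq (a d : ℝ) (ha : 0 ≤ a) (hd : 0 ≤ d) :
    d / (1 + (a + d))^2 ≤ 1/(1+a) - 1/(1+(a+d)) := by
  have h1 : (0:ℝ) < 1 + a := by linarith
  have h2 : (0:ℝ) < 1 + (a+d) := by linarith
  rw [div_sub_div _ _ (ne_of_gt h1) (ne_of_gt h2)]
  have hnum : 1 * (1+(a+d)) - (1+a) * 1 = d := by ring
  rw [hnum]
  apply div_le_div_of_nonneg_left hd (by positivity)
  nlinarith

theorem martingale_transform_bracket_bound {Ω : Type*} {m0 : MeasurableSpace Ω}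
    (μ : Measure Ω) [IsProbabilityMeasure μ]
    (𝒢 : Filtration ℕ m0)
    (X : ℕ → Ω → ℝ)
    (hadapt : ∀ k, StronglyMeasurable[𝒢 k] (X k))
    (hL2 : ∀ k, MemLp (X k) 2 μ)
    (hmdiff : ∀ k, 1 ≤ k → μ[X k | 𝒢 (k-1)] =ᵐ[μ] 0)
    (A : ℕ → Ω → ℝ)
    (hA : ∀ n, A n =ᵐ[μ] fun ω =>
      ∑ k ∈ Finset.Icc 1 n, (μ[fun ω' => (X k ω')^2 | 𝒢 (k-1)]) ω) :
    (∀ n, 1 ≤ n →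
      (μ[fun ω => (X n ω / (1 + A n ω))^2 | 𝒢 (n-1)]) ≤ᵐ[μ]
        fun ω => 1/(1 + A (n-1) ω) - 1/(1 + A n ω)) ∧
    (∀ n, (fun ω => ∑ k ∈ Finset.Icc 1 n,
        (μ[fun ω' => (X k ω' / (1 + A k ω'))^2 | 𝒢 (k-1)]) ω) ≤ᵐ[μ]
      fun _ => (1:ℝ)) := by
  classical
  -- truncated conditional variances
  set C : ℕ → Ω → ℝ := fun k ω => max 0 ((μ[fun ω' => (X k ω')^2 | 𝒢 (k-1)]) ω) with hCdef
  set B : ℕ → Ω → ℝ := fun n ω => ∑ k ∈ Finset.Icc 1 n, C k ω with hBdef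
  have hCnonneg : ∀ k ω, 0 ≤ C k ω := fun k ω => le_max_left _ _
  have hBnonneg : ∀ n ω, 0 ≤ B n ω := fun n ω =>
    Finset.sum_nonneg fun k _ => hCnonneg k ω
  have hCeq : ∀ k, C k =ᵐ[μ] μ[fun ω' => (X k ω')^2 | 𝒢 (k-1)] := by
    intro k
    have hnn : (0:Ω → ℝ) ≤ᵐ[μ] μ[fun ω' => (X k ω')^2 | 𝒢 (k-1)] :=
      condExp_nonneg (Eventually.of_forall fun ω => sq_nonneg _)
    filter_upwards [hnn] with ω hω
    exact max_eq_right hω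
  have hAB : ∀ n, A n =ᵐ[μ] B n := by
    intro n
    refine (hA n).trans ?_
    have : ∀ᵐ ω ∂μ, ∀ k ∈ Finset.Icc 1 n,
        (μ[fun ω' => (X k ω')^2 | 𝒢 (k-1)]) ω = C k ω := by
      rw [eventually_all_finset]
      intro k _
      filter_upwards [hCeq k] with ω hω using hω.symm
    filter_upwards [this] with ω hω
    exact Finset.sum_congr rfl hω
  have hBsucc : ∀ n, B (n+1) = fun ω => B n ω + C (n+1) ω := by
    intro n
    funext ω
    simp only [hBdef]
    rw [Finset.sum_Icc_succ_top (by omega : 1 ≤ n+1)]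
  have hBmeas : ∀ n, 1 ≤ n → StronglyMeasurable[𝒢 (n-1)] (B n) := by
    intro n hn
    apply Finset.stronglyMeasurable_fun_sum
    intro k hk
    have hk' : k - 1 ≤ n - 1 := by
      simp only [Finset.mem_Icc] at hk; omega
    have : Measurable[𝒢 (n-1)] (C k) :=
      measurable_const.max ((stronglyMeasurable_condExp.mono (𝒢.mono hk')).measurable)
    exact this.stronglyMeasurable
  -- Part 1
  have part1 : ∀ n, 1 ≤ n →
      (μ[fun ω => (X n ω / (1 + A n ω))^2 | 𝒢 (n-1)]) ≤ᵐ[μ]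
        fun ω => 1/(1 + A (n-1) ω) - 1/(1 + A n ω) := by
    intro n hn
    set f : Ω → ℝ := fun ω => (1/(1 + B n ω))^2 with hfdef
    set g : Ω → ℝ := fun ω => (X n ω)^2 with hgdef
    have hfmeas : StronglyMeasurable[𝒢 (n-1)] f := by
      have : Measurable[𝒢 (n-1)] f :=
        (measurable_const.div (measurable_const.add (hBmeas n hn).measurable)).pow
          measurable_const
      exact this.stronglyMeasurable
    have hfbound : ∀ ω, |f ω| ≤ 1 := by
      intro ω
      have h1 : (0:ℝ) < 1 + B n ω := by have := hBnonneg n ω; linarith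
      rw [abs_of_nonneg (by positivity)]
      simp only [hfdef]
      rw [div_pow, one_pow]
      rw [div_le_one (by positivity)]
      nlinarith [hBnonneg n ω]
    have hg_int : Integrable g μ := (hL2 n).integrable_sq
    have hfg_int : Integrable (f * g) μ := by
      refine Integrable.mono hg_int ?_ ?_
      · exact ((hfmeas.mono (𝒢.le _)).mul
          (((hadapt n).mono (𝒢.le _)).pow 2)).aestronglyMeasurable
      · refine Eventually.of_forall fun ω => ?_
        simp only [Pi.mul_apply, Real.norm_eq_abs]
        rw [abs_mul]
        calc |f ω| * |g ω| ≤ 1 * |g ω| :=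
              mul_le_mul_of_nonneg_right (hfbound ω) (abs_nonneg _)
          _ = |g ω| := one_mul _
    have hcongr : (fun ω => (X n ω / (1 + A n ω))^2) =ᵐ[μ] f * g := by
      filter_upwards [hAB n] with ω hω
      simp only [Pi.mul_apply, hfdef, hgdef, hω]
      ring
    have hpull : μ[f * g | 𝒢 (n-1)] =ᵐ[μ] f * μ[g | 𝒢 (n-1)] :=
      condExp_mul_of_stronglyMeasurable_left hfmeas hfg_int hg_int
    have key : μ[fun ω => (X n ω / (1 + A n ω))^2 | 𝒢 (n-1)] =ᵐ[μ]
        f * μ[g | 𝒢 (n-1)] := (condExp_congr_ae hcongr).trans hpull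
    obtain ⟨m, rfl⟩ : ∃ m, n = m + 1 := ⟨n - 1, by omega⟩
    have hm1 : m + 1 - 1 = m := by omega
    filter_upwards [key, hCeq (m+1), hAB (m+1), hAB m] with ω hkey hCω hABn hABm
    rw [hkey]
    simp only [Pi.mul_apply]
    rw [hm1] at hCω ⊢
    rw [← hCω, hABn, hABm]
    have hBeq : B (m+1) ω = B m ω + C (m+1) ω := by rw [hBsucc m]
    rw [hBeq]
    have := aux_frac_ineq (B m ω) (C (m+1) ω) (hBnonneg m ω) (hCnonneg (m+1) ω)
    calc f ω * C (m+1) ω = C (m+1) ω / (1 + (B m ω + C (m+1) ω))^2 := by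
          simp only [hfdef, hBeq]
          rw [div_pow, one_pow, div_mul_eq_mul_div, one_mul]
      _ ≤ _ := this
  refine ⟨part1, ?_⟩
  -- Part 2: stronger statement by induction
  have part2' : ∀ n, (fun ω => ∑ k ∈ Finset.Icc 1 n,
      (μ[fun ω' => (X k ω' / (1 + A k ω'))^2 | 𝒢 (k-1)]) ω) ≤ᵐ[μ]
      fun ω => 1 - 1/(1 + B n ω) := by
    intro n
    induction n with
    | zero =>
      refine Eventually.of_forall fun ω => ?_
      simp [hBdef]
    | succ m ih =>
      have hstep := part1 (m+1) (by omega)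
      have hm1 : m + 1 - 1 = m := by omega
      rw [hm1] at hstep
      filter_upwards [ih, hstep, hAB m, hAB (m+1)] with ω hih hs hABm hABm1
      rw [Finset.sum_Icc_succ_top (by omega : 1 ≤ m+1)]
      have hBeq : B (m+1) ω = B m ω + C (m+1) ω := by rw [hBsucc m]
      have := hs
      rw [hABm, hABm1] at this
      calc (∑ k ∈ Finset.Icc 1 m,
            (μ[fun ω' => (X k ω' / (1 + A k ω'))^2 | 𝒢 (k-1)]) ω)
            + (μ[fun ω' => (X (m+1) ω' / (1 + A (m+1) ω'))^2 | 𝒢 (m+1-1)]) ω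
          ≤ (1 - 1/(1 + B m ω)) + (1/(1 + B m ω) - 1/(1 + B (m+1) ω)) := by
            rw [hm1]; exact add_le_add hih this
        _ = 1 - 1/(1 + B (m+1) ω) := by ring
  intro n
  filter_upwards [part2' n] with ω hω
  refine hω.trans ?_
  have h1 : (0:ℝ) < 1 + B n ω := by have := hBnonneg n ω; linarith
  have : 0 ≤ 1 / (1 + B n ω) := by positivity
  linarith
end

section
/- (Martingale strong law) Let S_n be a square-integrable martingale with S_0 = 0 and predictable quadratic variation ⟨S⟩_n = Σ_{k≤n} E[(S_k − S_{k−1})² | 𝒢_{k−1}]. Then S_n/⟨S⟩_n → 0 almost surely on the event {⟨S⟩_∞ = ∞}. -/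
open MeasureTheory Filter Finset

private lemma sum_Icc_one_eq_sum_range (f : ℕ → ℝ) (n : ℕ) :
    ∑ k ∈ Finset.Icc 1 n, f k = ∑ j ∈ Finset.range n, f (j + 1) := by
  induction n with
  | zero => simp
  | succ n ih =>
      rw [Finset.sum_range_succ, ← ih,
        Finset.sum_Icc_succ_top (by omega : 1 ≤ n + 1)]

private lemma abel_identity (b T : ℕ → ℝ) (n : ℕ) :
    ∑ k ∈ Finset.range n, b (k + 1) * (T (k + 1) - T k) =
      b n * T n - b 0 * T 0 - ∑ j ∈ Finset.range n, (b (j + 1) - b j) * T j := by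
  induction n with
  | zero => simp
  | succ n ih =>
      rw [Finset.sum_range_succ, ih, Finset.sum_range_succ]
      ring

private lemma kronecker (b : ℕ → ℝ) (hb1 : ∀ n, 1 ≤ b n) (hmono : Monotone b)
    (hbtop : Tendsto b atTop atTop) (x : ℕ → ℝ) (c : ℝ)
    (hT : Tendsto (fun n => ∑ k ∈ Finset.range n, x k / b (k + 1)) atTop (nhds c)) :
    Tendsto (fun n => (∑ k ∈ Finset.range n, x k) / b n) atTop (nhds 0) := by
  set T : ℕ → ℝ := fun n => ∑ k ∈ Finset.range n, x k / b (k + 1) with hTdef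
  have hbne : ∀ n, b n ≠ 0 := fun n => by have := hb1 n; linarith
  have hx : ∀ k, x k = b (k + 1) * (T (k + 1) - T k) := by
    intro k
    have h : T (k + 1) - T k = x k / b (k + 1) := by
      simp [hTdef, Finset.sum_range_succ]
    rw [h, mul_div_cancel₀ _ (hbne _)]
  have hsum : ∀ n, ∑ k ∈ Finset.range n, x k =
      b n * T n - ∑ j ∈ Finset.range n, (b (j + 1) - b j) * T j := by
    intro n
    calc ∑ k ∈ Finset.range n, x k
        = ∑ k ∈ Finset.range n, b (k + 1) * (T (k + 1) - T k) :=
          Finset.sum_congr rfl fun k _ => hx k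
      _ = b n * T n - b 0 * T 0 - ∑ j ∈ Finset.range n, (b (j + 1) - b j) * T j :=
          abel_identity b T n
      _ = _ := by simp [hTdef]
  set w : ℕ → ℝ := fun j => b (j + 1) - b j with hwdef
  have hw_nonneg : ∀ j, (0:ℝ) ≤ w j := fun j => sub_nonneg.2 (hmono (Nat.le_succ j))
  have hWeq : ∀ n, ∑ j ∈ Finset.range n, w j = b n - b 0 :=
    fun n => Finset.sum_range_sub b n
  have hWtop : Tendsto (fun n => ∑ j ∈ Finset.range n, w j) atTop atTop := by
    simp_rw [hWeq]
    exact hbtop.atTop_add tendsto_const_nhds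
  have hlittle : (fun j => w j * (T j - c)) =o[atTop] w := by
    rw [Asymptotics.isLittleO_iff]
    intro ε hε
    filter_upwards [Metric.tendsto_nhds.1 hT ε hε] with j hj
    rw [Real.norm_eq_abs, Real.norm_eq_abs, abs_mul, abs_of_nonneg (hw_nonneg j)]
    rw [Real.dist_eq] at hj
    have : |T j - c| ≤ ε := le_of_lt hj
    calc w j * |T j - c| ≤ w j * ε :=
          mul_le_mul_of_nonneg_left this (hw_nonneg j)
      _ = ε * w j := mul_comm _ _
  have hsum_little : (fun n => ∑ j ∈ Finset.range n, w j * (T j - c)) =o[atTop]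
      (fun n => ∑ j ∈ Finset.range n, w j) :=
    hlittle.sum_range hw_nonneg hWtop
  have hWO : (fun n => ∑ j ∈ Finset.range n, w j) =O[atTop] b := by
    rw [Asymptotics.isBigO_iff]
    refine ⟨1, Filter.Eventually.of_forall fun n => ?_⟩
    rw [one_mul, hWeq, Real.norm_eq_abs, Real.norm_eq_abs]
    have h0 := hb1 0
    have hn := hb1 n
    have : b 0 ≤ b n := hmono (Nat.zero_le n)
    rw [abs_of_nonneg (by linarith), abs_of_nonneg (by linarith)]
    linarith
  have hDdiv : Tendsto (fun n => (∑ j ∈ Finset.range n, w j * (T j - c)) / b n)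
      atTop (nhds 0) := (hsum_little.trans_isBigO hWO).tendsto_div_nhds_zero
  have hb0div : Tendsto (fun n => c * b 0 / b n) atTop (nhds 0) :=
    Tendsto.div_atTop tendsto_const_nhds hbtop
  have hTc : Tendsto (fun n => T n - c) atTop (nhds 0) := by
    simpa using hT.sub_const c
  have key : ∀ n, (∑ k ∈ Finset.range n, x k) / b n =
      (T n - c) - (∑ j ∈ Finset.range n, w j * (T j - c)) / b n + c * b 0 / b n := by
    intro n
    have hsplit : ∑ j ∈ Finset.range n, w j * T j =
        (∑ j ∈ Finset.range n, w j * (T j - c)) + c * (b n - b 0) := by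
      rw [← hWeq, Finset.mul_sum, ← Finset.sum_add_distrib]
      exact Finset.sum_congr rfl fun j _ => by ring
    rw [hsum n, hsplit]
    have := hbne n
    field_simp
    ring
  rw [show (0:ℝ) = 0 - 0 + 0 by ring]
  exact Tendsto.congr (fun n => (key n).symm) ((hTc.sub hDdiv).add hb0div)

private lemma integrable_mul_of_memL2 {Ω : Type*} {m0 : MeasurableSpace Ω} {μ : Measure Ω}
    {f g : Ω → ℝ} (hf : MemLp f 2 μ) (hg : MemLp g 2 μ) :
    Integrable (fun ω => f ω * g ω) μ := by
  refine Integrable.mono' ((hf.integrable_sq.add hg.integrable_sq).div_const 2)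
    (hf.aestronglyMeasurable.mul hg.aestronglyMeasurable)
    (Filter.Eventually.of_forall fun ω => ?_)
  rw [Real.norm_eq_abs, abs_mul]
  simp only [Pi.add_apply]
  nlinarith [sq_nonneg (|f ω| - |g ω|), sq_abs (f ω), sq_abs (g ω), abs_nonneg (f ω),
    abs_nonneg (g ω)]

theorem martingale_strong_law {Ω : Type*} {m0 : MeasurableSpace Ω}
    (μ : Measure Ω) [IsProbabilityMeasure μ]
    (𝒢 : Filtration ℕ m0)
    (S : ℕ → Ω → ℝ)
    (hmart : Martingale S 𝒢 μ)
    (hS0 : S 0 = 0)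
    (hL2 : ∀ n, MemLp (S n) 2 μ)
    (A : ℕ → Ω → ℝ)
    (hA : ∀ n, A n =ᵐ[μ] fun ω =>
      ∑ k ∈ Finset.Icc 1 n, (μ[fun ω' => (S k ω' - S (k-1) ω')^2 | 𝒢 (k-1)]) ω) :
    ∀ᵐ ω ∂μ, Tendsto (fun n => A n ω) atTop atTop →
      Tendsto (fun n => S n ω / A n ω) atTop (nhds 0) := by
  have hSint : ∀ n, Integrable (S n) μ := fun n => hmart.integrable n
  set d : ℕ → Ω → ℝ := fun k ω => S k ω - S (k - 1) ω with hd_def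
  set g : ℕ → Ω → ℝ := fun k ω =>
    max ((μ[fun ω' => (S k ω' - S (k - 1) ω') ^ 2 | 𝒢 (k - 1)]) ω) 0 with hg_def
  set C : ℕ → Ω → ℝ := fun n ω => ∑ k ∈ Finset.Icc 1 n, g k ω with hC_def
  set M : ℕ → Ω → ℝ := fun n ω => ∑ k ∈ Finset.Icc 1 n, d k ω / (1 + C k ω) with hM_def
  -- basic facts
  have hg_nonneg : ∀ k ω, 0 ≤ g k ω := fun k ω => le_max_right _ _
  have hC_nonneg : ∀ n ω, 0 ≤ C n ω := fun n ω =>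
    Finset.sum_nonneg fun k _ => hg_nonneg k ω
  have hC_succ : ∀ n ω, C (n + 1) ω = C n ω + g (n + 1) ω := by
    intro n ω
    simp only [hC_def]
    rw [Finset.sum_Icc_succ_top (by omega : 1 ≤ n + 1)]
  have hC_mono : ∀ ω, Monotone fun n => C n ω := fun ω =>
    monotone_nat_of_le_succ fun n => by
      rw [hC_succ]; linarith [hg_nonneg (n + 1) ω]
  have hden_ge : ∀ k ω, (1:ℝ) ≤ 1 + C k ω := fun k ω => by linarith [hC_nonneg k ω]
  have hden_pos : ∀ k ω, (0:ℝ) < 1 + C k ω := fun k ω => lt_of_lt_of_le one_pos (hden_ge k ω)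
  -- measurability
  have hg_meas : ∀ k, StronglyMeasurable[𝒢 (k - 1)] (g k) := fun k =>
    (stronglyMeasurable_condExp.measurable.max measurable_const).stronglyMeasurable
  have hC_meas : ∀ n j, n ≤ j + 1 → StronglyMeasurable[𝒢 j] (C n) := by
    intro n j h
    have hCe : C n = ∑ k ∈ Finset.Icc 1 n, g k := by
      funext ω; simp [hC_def]
    rw [hCe]
    refine Finset.stronglyMeasurable_sum _ fun k hk => (hg_meas k).mono (𝒢.mono ?_)
    have := Finset.mem_Icc.1 hk
    omega
  have hd_meas : ∀ k, StronglyMeasurable[𝒢 k] (d k) := fun k =>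
    (hmart.stronglyAdapted k).sub ((hmart.stronglyAdapted (k - 1)).mono (𝒢.mono (Nat.sub_le k 1)))
  have hd_L2 : ∀ k, MemLp (d k) 2 μ := fun k => (hL2 k).sub (hL2 (k - 1))
  have hd_int : ∀ k, Integrable (d k) μ := fun k => (hSint k).sub (hSint (k - 1))
  have hterm_meas : ∀ k j, k ≤ j →
      StronglyMeasurable[𝒢 j] (fun ω => d k ω / (1 + C k ω)) := by
    intro k j hkj
    exact (((hd_meas k).mono (𝒢.mono hkj)).measurable.div
      (measurable_const.add (hC_meas k j (by omega)).measurable)).stronglyMeasurable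
  have hterm_L2 : ∀ k, MemLp (fun ω => d k ω / (1 + C k ω)) 2 μ := by
    intro k
    refine (hd_L2 k).of_le
      (((hterm_meas k k le_rfl).mono (𝒢.le k)).aestronglyMeasurable)
      (Filter.Eventually.of_forall fun ω => ?_)
    rw [Real.norm_eq_abs, Real.norm_eq_abs, abs_div, abs_of_pos (hden_pos k ω)]
    exact div_le_self (abs_nonneg _) (hden_ge k ω)
  have hterm_int : ∀ k, Integrable (fun ω => d k ω / (1 + C k ω)) μ := fun k =>
    (hterm_L2 k).integrable one_le_two
  have hM_eq : ∀ n, M n = ∑ k ∈ Finset.Icc 1 n, fun ω => d k ω / (1 + C k ω) := by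
    intro n; funext ω; simp [hM_def]
  have hM_adapted : StronglyAdapted 𝒢 M := by
    intro n
    rw [hM_eq]
    exact Finset.stronglyMeasurable_sum _ fun k hk =>
      hterm_meas k n (Finset.mem_Icc.1 hk).2
  have hM_L2 : ∀ n, MemLp (M n) 2 μ := by
    intro n
    rw [hM_eq]
    exact memLp_finset_sum' _ fun k _ => hterm_L2 k
  have hM_int : ∀ n, Integrable (M n) μ := fun n => (hM_L2 n).integrable one_le_two
  -- conditional expectation of the increments
  have hd0 : ∀ n, μ[d (n + 1) | 𝒢 n] =ᵐ[μ] 0 := by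
    intro n
    have hdez : d (n + 1) = S (n + 1) - S n := by
      funext ω; simp [hd_def]
    have h1 : μ[S (n + 1)|𝒢 n] =ᵐ[μ] S n := hmart.condExp_ae_eq (Nat.le_succ n)
    have h2 : μ[S n|𝒢 n] = S n :=
      condExp_of_stronglyMeasurable (𝒢.le n) (hmart.stronglyAdapted n) (hSint n)
    rw [hdez]
    filter_upwards [condExp_sub (hSint (n + 1)) (hSint n) _, h1] with ω hω h1ω
    rw [hω]
    simp [h1ω, h2]
  have hterm0 : ∀ n, μ[(fun ω => d (n + 1) ω / (1 + C (n + 1) ω)) | 𝒢 n] =ᵐ[μ] 0 := by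
    intro n
    set h : Ω → ℝ := fun ω => (1 + C (n + 1) ω)⁻¹ with hh_def
    have hh_meas : StronglyMeasurable[𝒢 n] h :=
      ((measurable_const.add (hC_meas (n + 1) n le_rfl).measurable).inv).stronglyMeasurable
    have hprod : (fun ω => d (n + 1) ω / (1 + C (n + 1) ω)) = h * d (n + 1) := by
      funext ω; simp [hh_def, div_eq_mul_inv, mul_comm]
    have hint : Integrable (h * d (n + 1)) μ := by
      rw [← hprod]; exact hterm_int (n + 1)
    rw [hprod]
    filter_upwards [condExp_mul_of_stronglyMeasurable_left hh_meas hint (hd_int (n + 1)),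
      hd0 n] with ω h1ω h2ω
    simp only [h1ω, Pi.mul_apply, h2ω, Pi.zero_apply, mul_zero]
  -- M is a martingale
  have hMmart : Martingale M 𝒢 μ := by
    refine martingale_nat hM_adapted hM_int fun n => ?_
    have hsplit : M (n + 1) = M n + fun ω => d (n + 1) ω / (1 + C (n + 1) ω) := by
      funext ω
      simp only [hM_def, Pi.add_apply]
      rw [Finset.sum_Icc_succ_top (by omega : 1 ≤ n + 1)]
    have h2 : μ[M n|𝒢 n] = M n :=
      condExp_of_stronglyMeasurable (𝒢.le n) (hM_adapted n) (hM_int n)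
    rw [hsplit]
    filter_upwards [condExp_add (hM_int n) (hterm_int (n + 1)) _, hterm0 n] with ω h1ω h2ω
    rw [h1ω]
    simp [h2, h2ω]
  -- the L² bound
  have hinv_int : ∀ n, Integrable (fun ω => (1 + C n ω)⁻¹) μ := by
    intro n
    refine Integrable.mono' (integrable_const 1)
      (((((measurable_const.add (hC_meas n n (by omega)).measurable).inv).stronglyMeasurable.mono
        (𝒢.le n)).aestronglyMeasurable))
      (Filter.Eventually.of_forall fun ω => ?_)
    rw [Real.norm_eq_abs, abs_of_pos (inv_pos.2 (hden_pos n ω))]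
    exact inv_le_one_of_one_le₀ (hden_ge n ω)
  have hMsq_int : ∀ n, Integrable (fun ω => M n ω ^ 2) μ := fun n => (hM_L2 n).integrable_sq
  have hdsq_int : ∀ k, Integrable (fun ω => d k ω ^ 2) μ := fun k => (hd_L2 k).integrable_sq
  have hgcond : ∀ n, μ[(fun ω => d (n + 1) ω ^ 2) | 𝒢 n] =ᵐ[μ] g (n + 1) := by
    intro n
    have heq : (fun ω => d (n + 1) ω ^ 2) =
        (fun ω' => (S (n + 1) ω' - S (n + 1 - 1) ω') ^ 2) := rfl
    have h0 : (0:Ω → ℝ) ≤ᵐ[μ] μ[(fun ω' => (S (n + 1) ω' - S (n + 1 - 1) ω') ^ 2) | 𝒢 n] :=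
      condExp_nonneg (Filter.Eventually.of_forall fun ω => sq_nonneg _)
    rw [heq]
    filter_upwards [h0] with ω hω
    simp only [Pi.zero_apply] at hω
    exact (max_eq_left hω).symm
  have hbound : ∀ n, (∫ ω, M n ω ^ 2 ∂μ) + ∫ ω, (1 + C n ω)⁻¹ ∂μ ≤ 1 := by
    intro n
    induction n with
    | zero =>
        have hM0 : ∀ ω, M 0 ω = 0 := fun ω => by simp [hM_def]
        have hC0 : ∀ ω, C 0 ω = 0 := fun ω => by simp [hC_def]
        simp [hM0, hC0]
    | succ n ih =>
        set Δ : Ω → ℝ := fun ω => d (n + 1) ω / (1 + C (n + 1) ω) with hΔ_def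
        have hMsucc : ∀ ω, M (n + 1) ω = M n ω + Δ ω := by
          intro ω
          simp only [hM_def, hΔ_def]
          rw [Finset.sum_Icc_succ_top (by omega : 1 ≤ n + 1)]
        have hΔ_L2 : MemLp Δ 2 μ := hterm_L2 (n + 1)
        have hΔsq_int : Integrable (fun ω => Δ ω ^ 2) μ := hΔ_L2.integrable_sq
        have hcross_int : Integrable (fun ω => M n ω * Δ ω) μ :=
          integrable_mul_of_memL2 (hM_L2 n) hΔ_L2
        -- cross term is zero
        have hcross : (∫ ω, M n ω * Δ ω ∂μ) = 0 := by
          have hpull : μ[(M n) * Δ | 𝒢 n] =ᵐ[μ] (M n) * μ[Δ | 𝒢 n] :=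
            condExp_mul_of_stronglyMeasurable_left (hM_adapted n) hcross_int (hterm_int (n + 1))
          have hzero : μ[(M n) * Δ | 𝒢 n] =ᵐ[μ] 0 := by
            filter_upwards [hpull, hterm0 n] with ω h1ω h2ω
            simp only [h1ω, Pi.mul_apply, show μ[Δ | 𝒢 n] ω = 0 from h2ω, Pi.zero_apply, mul_zero]
          calc (∫ ω, M n ω * Δ ω ∂μ) = ∫ ω, ((M n) * Δ) ω ∂μ := rfl
            _ = ∫ ω, (μ[(M n) * Δ | 𝒢 n]) ω ∂μ := (integral_condExp (𝒢.le n)).symm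
            _ = ∫ ω, (0:Ω → ℝ) ω ∂μ := integral_congr_ae hzero
            _ = 0 := by simp
        -- second moment of the increment
        have hΔsq_le : (∫ ω, Δ ω ^ 2 ∂μ) ≤
            (∫ ω, (1 + C n ω)⁻¹ ∂μ) - ∫ ω, (1 + C (n + 1) ω)⁻¹ ∂μ := by
          set h : Ω → ℝ := fun ω => (1 + C (n + 1) ω)⁻¹ with hh_def
          have hh_meas : StronglyMeasurable[𝒢 n] (fun ω => h ω ^ 2) :=
            (((measurable_const.add (hC_meas (n + 1) n le_rfl).measurable).inv).pow_const
              2).stronglyMeasurable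
          have hΔsq_eq : (fun ω => Δ ω ^ 2) =
              (fun ω => h ω ^ 2) * (fun ω => d (n + 1) ω ^ 2) := by
            funext ω
            simp only [hΔ_def, hh_def, Pi.mul_apply]
            rw [div_pow, div_eq_mul_inv, ← inv_pow, mul_comm]
          have hint2 : Integrable ((fun ω => h ω ^ 2) * fun ω => d (n + 1) ω ^ 2) μ := by
            rw [← hΔsq_eq]; exact hΔsq_int
          have hpull2 : μ[(fun ω => h ω ^ 2) * (fun ω => d (n + 1) ω ^ 2) | 𝒢 n] =ᵐ[μ]
              (fun ω => h ω ^ 2) * μ[(fun ω => d (n + 1) ω ^ 2) | 𝒢 n] :=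
            condExp_mul_of_stronglyMeasurable_left hh_meas hint2 (hdsq_int (n + 1))
          have hrhs_int : Integrable
              ((fun ω => h ω ^ 2) * μ[(fun ω => d (n + 1) ω ^ 2) | 𝒢 n]) μ :=
            integrable_condExp.congr hpull2
          have hptwise : ∀ ω, (μ[(fun ω => d (n + 1) ω ^ 2) | 𝒢 n]) ω = g (n + 1) ω →
              ((fun ω => h ω ^ 2) * μ[(fun ω => d (n + 1) ω ^ 2) | 𝒢 n]) ω ≤
                (1 + C n ω)⁻¹ - (1 + C (n + 1) ω)⁻¹ := by
            intro ω hω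
            have ha : (1:ℝ) ≤ 1 + C n ω := hden_ge n ω
            have hb : 1 + C n ω ≤ 1 + C (n + 1) ω := by
              linarith [hg_nonneg (n + 1) ω, hC_succ n ω]
            have hgeq : g (n + 1) ω = (1 + C (n + 1) ω) - (1 + C n ω) := by
              rw [hC_succ n ω]; ring
            simp only [Pi.mul_apply, hω, hgeq, hh_def]
            set a := 1 + C n ω with ha_def
            set b := 1 + C (n + 1) ω with hbb_def
            have ha0 : (0:ℝ) < a := hden_pos n ω
            have hb0 : (0:ℝ) < b := hden_pos (n + 1) ω
            have h1 : a⁻¹ - b⁻¹ = (b - a) / (a * b) := by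
              field_simp
            have h2 : b⁻¹ ^ 2 * (b - a) = (b - a) / (b * b) := by
              rw [inv_pow, sq]
              field_simp
            rw [h1, h2, div_le_div_iff₀ (by positivity) (by positivity)]
            nlinarith [mul_le_mul_of_nonneg_left
              (mul_le_mul_of_nonneg_right hb hb0.le) (sub_nonneg.2 hb)]
          calc (∫ ω, Δ ω ^ 2 ∂μ)
              = ∫ ω, ((fun ω => h ω ^ 2) * fun ω => d (n + 1) ω ^ 2) ω ∂μ := by
                rw [← hΔsq_eq]
            _ = ∫ ω, (μ[(fun ω => h ω ^ 2) * (fun ω => d (n + 1) ω ^ 2) | 𝒢 n]) ω ∂μ :=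
                (integral_condExp (𝒢.le n)).symm
            _ = ∫ ω, ((fun ω => h ω ^ 2) * μ[(fun ω => d (n + 1) ω ^ 2) | 𝒢 n]) ω ∂μ :=
                integral_congr_ae hpull2
            _ ≤ ∫ ω, ((1 + C n ω)⁻¹ - (1 + C (n + 1) ω)⁻¹) ∂μ := by
                refine integral_mono_ae hrhs_int ((hinv_int n).sub (hinv_int (n + 1))) ?_
                filter_upwards [hgcond n] with ω hω
                exact hptwise ω hω
            _ = (∫ ω, (1 + C n ω)⁻¹ ∂μ) - ∫ ω, (1 + C (n + 1) ω)⁻¹ ∂μ :=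
                integral_sub (hinv_int n) (hinv_int (n + 1))
        -- expansion of the second moment
        have hexp : (∫ ω, M (n + 1) ω ^ 2 ∂μ) =
            (∫ ω, M n ω ^ 2 ∂μ) + 2 * (∫ ω, M n ω * Δ ω ∂μ) + ∫ ω, Δ ω ^ 2 ∂μ := by
          have : (fun ω => M (n + 1) ω ^ 2) =
              fun ω => M n ω ^ 2 + 2 * (M n ω * Δ ω) + Δ ω ^ 2 := by
            funext ω; rw [hMsucc ω]; ring
          rw [this]
          have e1 : (∫ ω, (M n ω ^ 2 + 2 * (M n ω * Δ ω) + Δ ω ^ 2) ∂μ) =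
              (∫ ω, (M n ω ^ 2 + 2 * (M n ω * Δ ω)) ∂μ) + ∫ ω, Δ ω ^ 2 ∂μ :=
            integral_add ((hMsq_int n).add (hcross_int.const_mul 2)) hΔsq_int
          have e2 : (∫ ω, (M n ω ^ 2 + 2 * (M n ω * Δ ω)) ∂μ) =
              (∫ ω, M n ω ^ 2 ∂μ) + ∫ ω, 2 * (M n ω * Δ ω) ∂μ :=
            integral_add (hMsq_int n) (hcross_int.const_mul 2)
          have e3 : (∫ ω, 2 * (M n ω * Δ ω) ∂μ) = 2 * ∫ ω, M n ω * Δ ω ∂μ :=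
            integral_const_mul 2 _
          rw [e1, e2, e3]
        rw [hexp, hcross]
        linarith [hΔsq_le, ih]
  -- L¹ bound and convergence
  have hL1bdd : ∀ n, eLpNorm (M n) 1 μ ≤ ((2:NNReal) : ENNReal) := by
    intro n
    have habs : (∫ ω, ‖M n ω‖ ∂μ) ≤ 2 := by
      have h1 : (∫ ω, ‖M n ω‖ ∂μ) ≤ ∫ ω, (1 + M n ω ^ 2) ∂μ := by
        refine integral_mono (hM_int n).norm ((integrable_const 1).add (hMsq_int n))
          fun ω => ?_
        rw [Real.norm_eq_abs]
        nlinarith [sq_abs (M n ω), abs_nonneg (M n ω), sq_nonneg (|M n ω| - 1)]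
      have h2 : (∫ ω, (1 + M n ω ^ 2) ∂μ) = 1 + ∫ ω, M n ω ^ 2 ∂μ := by
        rw [integral_add (integrable_const 1) (hMsq_int n)]
        simp
      have h3 : (∫ ω, M n ω ^ 2 ∂μ) ≤ 1 := by
        have := hbound n
        have h4 : (0:ℝ) ≤ ∫ ω, (1 + C n ω)⁻¹ ∂μ :=
          integral_nonneg fun ω => le_of_lt (inv_pos.2 (hden_pos n ω))
        linarith
      linarith
    calc eLpNorm (M n) 1 μ = ∫⁻ ω, ‖M n ω‖ₑ ∂μ := eLpNorm_one_eq_lintegral_enorm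
      _ = ENNReal.ofReal (∫ ω, ‖M n ω‖ ∂μ) :=
          (ofReal_integral_norm_eq_lintegral_enorm (hM_int n)).symm
      _ ≤ ENNReal.ofReal 2 := ENNReal.ofReal_le_ofReal habs
      _ = ((2:NNReal) : ENNReal) := by norm_num
  have hconv : ∀ᵐ ω ∂μ, ∃ c, Tendsto (fun n => M n ω) atTop (nhds c) :=
    hMmart.submartingale.exists_ae_tendsto_of_bdd hL1bdd
  -- A = C a.e.
  have hAC : ∀ᵐ ω ∂μ, ∀ n, A n ω = C n ω := by
    rw [ae_all_iff]
    intro n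
    have hgk : ∀ k : ℕ, (fun ω => (μ[fun ω' => (S k ω' - S (k - 1) ω') ^ 2 | 𝒢 (k - 1)]) ω)
        =ᵐ[μ] g k := by
      intro k
      have h0 : (0:Ω → ℝ) ≤ᵐ[μ] μ[fun ω' => (S k ω' - S (k - 1) ω') ^ 2 | 𝒢 (k - 1)] :=
        condExp_nonneg (Filter.Eventually.of_forall fun ω => sq_nonneg _)
      filter_upwards [h0] with ω hω
      simp only [Pi.zero_apply] at hω
      exact (max_eq_left hω).symm
    have hall : ∀ᵐ ω ∂μ, ∀ k : ℕ,
        (μ[fun ω' => (S k ω' - S (k - 1) ω') ^ 2 | 𝒢 (k - 1)]) ω = g k ω :=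
      ae_all_iff.2 hgk
    filter_upwards [hA n, hall] with ω hωA hωg
    rw [hωA]
    simp only [hC_def]
    exact Finset.sum_congr rfl fun k _ => hωg k
  -- conclusion
  filter_upwards [hconv, hAC] with ω hconvω hACω hAtop
  obtain ⟨c, hc⟩ := hconvω
  have hCtop : Tendsto (fun n => C n ω) atTop atTop :=
    hAtop.congr fun n => hACω n
  set b : ℕ → ℝ := fun n => 1 + C n ω with hb_def
  have hb1 : ∀ n, 1 ≤ b n := fun n => hden_ge n ω
  have hbmono : Monotone b := fun i j hij => by
    simp only [hb_def]
    linarith [hC_mono ω hij]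
  have hbtop : Tendsto b atTop atTop :=
    tendsto_atTop_add_const_left _ 1 hCtop
  set x : ℕ → ℝ := fun k => S (k + 1) ω - S k ω with hx_def
  have hTeq : ∀ n, M n ω = ∑ k ∈ Finset.range n, x k / b (k + 1) := by
    intro n
    simp only [hM_def]
    rw [sum_Icc_one_eq_sum_range (fun k => d k ω / (1 + C k ω)) n]
    refine Finset.sum_congr rfl fun j _ => ?_
    simp [hd_def, hx_def, hb_def]
  have hT : Tendsto (fun n => ∑ k ∈ Finset.range n, x k / b (k + 1)) atTop (nhds c) :=
    hc.congr fun n => hTeq n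
  have hxsum : ∀ n, ∑ k ∈ Finset.range n, x k = S n ω := by
    intro n
    have := Finset.sum_range_sub (fun k => S k ω) n
    simp only [hx_def]
    rw [this, show S 0 ω = 0 from congrFun hS0 ω, sub_zero]
  have h1 : Tendsto (fun n => S n ω / (1 + C n ω)) atTop (nhds 0) := by
    have := kronecker b hb1 hbmono hbtop x c hT
    refine this.congr fun n => ?_
    rw [hxsum n]
  have hev : ∀ᶠ n in atTop, 1 ≤ C n ω := hCtop.eventually_ge_atTop 1
  have h2 : Tendsto (fun n => (1 + C n ω) / C n ω) atTop (nhds 1) := by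
    have ha : Tendsto (fun n => 1 / C n ω + 1) atTop (nhds (0 + 1)) :=
      (Tendsto.div_atTop tendsto_const_nhds hCtop).add tendsto_const_nhds
    rw [show (1:ℝ) = 0 + 1 by ring]
    refine Tendsto.congr' ?_ ha
    filter_upwards [hev] with n hn
    have hne : C n ω ≠ 0 := by linarith
    field_simp
    ring
  have hfinal : Tendsto (fun n => S n ω / (1 + C n ω) * ((1 + C n ω) / C n ω))
      atTop (nhds 0) := by
    rw [show (0:ℝ) = 0 * 1 by ring]
    exact h1.mul h2
  refine Tendsto.congr' ?_ hfinal
  filter_upwards [hev] with n hn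
  have hne : C n ω ≠ 0 := by linarith
  have hne' : 1 + C n ω ≠ 0 := by linarith
  rw [hACω n]
  field_simp
end
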